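/- Let G be a finite simple graph with vertex set [n] = {1,...,n}. Then the natural ordering 1,2,...,n is a perfect elimination ordering of G if and only if for every positive integer t, the number of proper colorings of G with colors in {1,...,t} equals ∑_{m≥0} (−1)^m · isf_m(G) · t^{n−m}. -/

import Mathlib

open Polynomial Classical

/-- A simple graph on a linearly ordered vertex type is an *increasing forest*. -/
def IsIncreasingForest {V : Type*} [LinearOrder V] (F : SimpleGraph V) : Prop :=
  F.IsAcyclic ∧ ∀ (r v : V), (∀ w, F.Reachable r w → r ≤ w) →
    ∀ p : F.Walk r v, p.IsPath → p.support.Chain' (· < ·)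

/-- `F` is an increasing spanning forest of `G`. -/
def IsISF {n : ℕ} (G : SimpleGraph (Fin n)) (F : Finset (Sym2 (Fin n))) : Prop :=
  (F : Set (Sym2 (Fin n))) ⊆ G.edgeSet ∧
    IsIncreasingForest (SimpleGraph.fromEdgeSet (F : Set (Sym2 (Fin n))))

lemma chain_gt_head_le {α : Type*} [Preorder α] :
    ∀ {l : List α} {a x : α}, (a :: l).Chain' (· > ·) → x ∈ a :: l → x ≤ a := by
  intro l
  induction l with
  | nil => intro a x _ hx; rw [List.mem_singleton] at hx; exact le_of_eq hx
  | cons b l ih =>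
    intro a x hc hx
    simp only [List.Chain'] at hc
    rw [List.isChain_cons_cons] at hc
    rcases List.mem_cons.mp hx with h | h
    · exact le_of_eq h
    · exact le_trans (ih hc.2 h) (le_of_lt hc.1)

open SimpleGraph Walk in
lemma chain_aux {n : ℕ} {H : SimpleGraph (Fin n)}
    (LC : ∀ ⦃u u' v : Fin n⦄, H.Adj u v → H.Adj u' v → u < v → u' < v → u = u') :
    ∀ {a b : Fin n} (p : H.Walk a b), p.IsPath →
      (∀ u, H.Adj u a → u < a → u ∉ p.support) → p.support.Chain' (· < ·) := by
  intro a b p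
  induction p with
  | nil => simp [List.Chain']
  | @cons a x b h q ih =>
    intro hp hroot
    have hxa : x ≠ a := h.ne'
    have hav : a < x := by
      rcases lt_or_gt_of_ne hxa with h1 | h1
      · exact absurd (by rw [support_cons]; exact List.mem_cons_of_mem _ q.start_mem_support)
          (hroot x h.symm h1)
      · exact h1
    rw [cons_isPath_iff] at hp
    have hq : q.support.Chain' (· < ·) := by
      refine ih hp.1 ?_
      intro u hu hlt hmem
      have : u = a := LC hu h hlt hav
      exact hp.2 (this ▸ hmem)
    simp only [support_cons, List.Chain']
    rw [List.isChain_cons]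
    refine ⟨?_, hq⟩
    intro y hy
    rw [support_eq_cons q] at hy
    simp only [List.head?_cons, Option.mem_def, Option.some.injEq] at hy
    rw [← hy]; exact hav

open SimpleGraph Walk in
lemma acyclic_of_LC {n : ℕ} {H : SimpleGraph (Fin n)}
    (LC : ∀ ⦃u u' v : Fin n⦄, H.Adj u v → H.Adj u' v → u < v → u' < v → u = u') :
    H.IsAcyclic := by
  intro v c hc
  have hne : c.support.toFinset.Nonempty := ⟨v, by simp [c.start_mem_support]⟩
  set m := c.support.toFinset.min' hne with hm
  have hmmem : m ∈ c.support := by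
    have := c.support.toFinset.min'_mem hne
    simpa using this
  have hminle : ∀ x ∈ c.support, m ≤ x := fun x hx =>
    c.support.toFinset.min'_le x (by simpa using hx)
  have key : ∀ (c'' : H.Walk m m), c''.IsCycle → (∀ x ∈ c''.support, m ≤ x) → False := by
    intro c'' hc'' hb
    cases c'' with
    | nil => exact hc''.ne_nil rfl
    | @cons _ x _ h q =>
      obtain ⟨hqpath, hedge⟩ := (cons_isCycle_iff q h).mp hc''
      have hmx : m < x := lt_of_le_of_ne
        (hb x (by rw [support_cons]; exact List.mem_cons_of_mem _ q.start_mem_support)) (h.ne)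
      have hchain : q.reverse.support.Chain' (· < ·) := by
        refine chain_aux LC q.reverse ((isPath_reverse_iff q).mpr hqpath) ?_
        intro u hu hlt hmem
        rw [support_reverse, List.mem_reverse] at hmem
        have : m ≤ u := hb u (by rw [support_cons]; exact List.mem_cons_of_mem _ hmem)
        exact absurd hlt (not_lt.mpr this)
      have hflip : q.support.Chain' (· > ·) := by
        rw [support_reverse] at hchain
        exact List.isChain_reverse.mp hchain
      cases q with
      | nil => exact H.loopless.irrefl m h
      | @cons _ y _ h2 q2 =>
        rw [support_cons, support_eq_cons q2] at hflip
        simp only [List.Chain'] at hflip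
        rw [List.isChain_cons_cons] at hflip
        have hyx : y < x := hflip.1
        by_cases hym : y = m
        · subst hym
          apply hedge
          rw [edges_cons, Sym2.eq_swap]
          exact List.mem_cons_self
        · have : y = m := LC h2.symm h hyx hmx
          exact hym this
  have hrot : (c.rotate m hmmem).IsCycle := hc.rotate hmmem
  refine key (c.rotate m hmmem) hrot ?_
  intro x hx
  rw [support_eq_cons (c.rotate m hmmem)] at hx
  rcases List.mem_cons.mp hx with h1 | h1
  · exact le_of_eq h1.symm
  · have := (support_rotate c m hmmem).mem_iff.mp h1
    exact hminle x (by rw [support_eq_cons c]; exact List.mem_cons_of_mem _ this)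

open SimpleGraph Walk in
lemma isISF_iff {n : ℕ} (G : SimpleGraph (Fin n)) (F : Finset (Sym2 (Fin n))) :
    IsISF G F ↔ ((F : Set (Sym2 (Fin n))) ⊆ G.edgeSet ∧
      ∀ ⦃u u' v : Fin n⦄, u < v → u' < v → s(u, v) ∈ F → s(u', v) ∈ F → u = u') := by
  set H := SimpleGraph.fromEdgeSet (F : Set (Sym2 (Fin n))) with hH
  constructor
  · rintro ⟨hFE, hac, hinc⟩
    refine ⟨hFE, ?_⟩
    intro u u' v huv hu'v h1 h2
    by_contra hne
    have hadj1 : H.Adj u v := by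
      rw [hH, fromEdgeSet_adj]; exact ⟨h1, ne_of_lt huv⟩
    have hadj2 : H.Adj u' v := by
      rw [hH, fromEdgeSet_adj]; exact ⟨h2, ne_of_lt hu'v⟩
    -- set up the root
    have hvcomp : v ∈ Finset.univ.filter (fun w => H.Reachable v w) :=
      Finset.mem_filter.mpr ⟨Finset.mem_univ v, SimpleGraph.Reachable.refl v⟩
    set r := (Finset.univ.filter (fun w => H.Reachable v w)).min' ⟨v, hvcomp⟩ with hr
    have hrreach : H.Reachable v r :=
      (Finset.mem_filter.mp ((Finset.univ.filter (fun w => H.Reachable v w)).min'_mem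
        ⟨v, hvcomp⟩)).2
    have hroot : ∀ w, H.Reachable r w → r ≤ w := by
      intro w hw
      exact Finset.min'_le _ w (Finset.mem_filter.mpr ⟨Finset.mem_univ w, hrreach.trans hw⟩)
    have hrltv : r < v := by
      have hru : r ≤ u := Finset.min'_le _ u
        (Finset.mem_filter.mpr ⟨Finset.mem_univ u, hadj1.symm.reachable⟩)
      exact lt_of_le_of_lt hru huv
    -- the unique path from r to v
    obtain ⟨w0⟩ := hrreach.symm
    set p : H.Path r v := w0.toPath with hp
    have hpchain : p.1.support.Chain' (· < ·) := hinc r v hroot p.1 p.2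
    obtain ⟨w, hvw, q, hqeq⟩ := Walk.exists_eq_cons_of_ne (ne_of_gt hrltv) p.1.reverse
    -- w < v
    have hwv : w < v := by
      have h1' : p.1.support.reverse.Chain' (· > ·) := by
        refine List.isChain_reverse.mpr ?_
        exact hpchain
      rw [← support_reverse, hqeq, support_cons, support_eq_cons q] at h1'
      simp only [List.Chain'] at h1'
      rw [List.isChain_cons_cons] at h1'
      exact h1'.1
    -- claim: any smaller neighbor of v equals w
    have claim : ∀ z, z < v → H.Adj z v → z = w := by
      intro z hzv hadjz
      have hreachz : H.Reachable r z := (hrreach.symm).trans hadjz.symm.reachable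
      obtain ⟨wz⟩ := hreachz
      set pz : H.Path r z := wz.toPath with hpz
      have hzchain : pz.1.support.Chain' (· < ·) := hinc r z hroot pz.1 pz.2
      have hvnot : v ∉ pz.1.support := by
        intro hvmem
        have hrevchain : pz.1.reverse.support.Chain' (· > ·) := by
          rw [support_reverse]
          exact List.isChain_reverse.mpr hzchain
        rw [support_eq_cons pz.1.reverse] at hrevchain
        have : v ≤ z := chain_gt_head_le hrevchain
          (by rw [← support_eq_cons pz.1.reverse, support_reverse, List.mem_reverse]; exact hvmem)
        exact absurd hzv (not_lt.mpr this)
      have hp2 : (pz.1.concat hadjz).IsPath := by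
        rw [← isPath_reverse_iff, reverse_concat, cons_isPath_iff]
        exact ⟨(isPath_reverse_iff _).mpr pz.2,
          by rw [support_reverse, List.mem_reverse]; exact hvnot⟩
      have huniq := (isAcyclic_iff_path_unique.mp hac) ⟨pz.1.concat hadjz, hp2⟩ p
      have heq : (pz.1.concat hadjz) = p.1 := congrArg Subtype.val huniq
      have heq2 : (pz.1.concat hadjz).reverse = p.1.reverse := by rw [heq]
      rw [reverse_concat, hqeq] at heq2
      have := congrArg (fun (wk : H.Walk v r) => wk.getVert 1) heq2
      simpa [Walk.getVert_cons_succ] using this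
    have hu : u = w := claim u huv hadj1
    have hu' : u' = w := claim u' hu'v hadj2
    exact hne (hu.trans hu'.symm)
  · rintro ⟨hFE, LC⟩
    have LCH : ∀ ⦃a a' b : Fin n⦄, H.Adj a b → H.Adj a' b → a < b → a' < b → a = a' := by
      intro a a' b h1 h2 hab ha'b
      rw [hH, fromEdgeSet_adj] at h1 h2
      exact LC hab ha'b h1.1 h2.1
    refine ⟨hFE, acyclic_of_LC LCH, ?_⟩
    intro r v hroot p hp
    refine chain_aux LCH p hp ?_
    intro u hu hlt _
    exact absurd (hroot u hu.symm.reachable) (not_le.mpr hlt)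
/-- The number of increasing spanning forests of `G` with `m` edges. -/
noncomputable def isf {n : ℕ} (G : SimpleGraph (Fin n)) (m : ℕ) : ℕ :=
  ((Finset.univ : Finset (Finset (Sym2 (Fin n)))).filter
    (fun F => IsISF G F ∧ F.card = m)).card

noncomputable def blw {n : ℕ} (G : SimpleGraph (Fin n)) (v : Fin n) : Finset (Fin n) :=
  Finset.univ.filter (fun u => u < v ∧ G.Adj u v)

lemma mem_blw {n : ℕ} {G : SimpleGraph (Fin n)} {u v : Fin n} :
    u ∈ blw G v ↔ u < v ∧ G.Adj u v := by simp [blw]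

noncomputable def Ov {n : ℕ} (G : SimpleGraph (Fin n)) (v : Fin n) :
    Finset (Option (Fin n)) := insert none ((blw G v).image some)

noncomputable def Phi {n : ℕ} (f : Fin n → Option (Fin n)) : Finset (Sym2 (Fin n)) :=
  Finset.univ.biUnion (fun v => (f v).elim ∅ (fun u => {s(u, v)}))

lemma mem_Phi {n : ℕ} {f : Fin n → Option (Fin n)} {e : Sym2 (Fin n)} :
    e ∈ Phi f ↔ ∃ v u, f v = some u ∧ e = s(u, v) := by
  simp only [Phi, Finset.mem_biUnion, Finset.mem_univ, true_and]
  constructor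
  · rintro ⟨v, hv⟩
    cases hfv : f v with
    | none => rw [hfv] at hv; simp at hv
    | some u =>
      rw [hfv] at hv; simp only [Option.elim_some, Finset.mem_singleton] at hv
      exact ⟨v, u, hfv, hv⟩
  · rintro ⟨v, u, h1, h2⟩
    exact ⟨v, by rw [h1]; simpa using h2⟩

lemma hOf {n : ℕ} {G : SimpleGraph (Fin n)} {f : Fin n → Option (Fin n)}
    (hf : f ∈ Fintype.piFinset (Ov G)) : ∀ v u, f v = some u → u ∈ blw G v := by
  intro v u hfv
  have := Fintype.mem_piFinset.mp hf v
  rw [Ov, Finset.mem_insert, hfv] at this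
  rcases this with h | h
  · exact absurd h (by simp)
  · obtain ⟨w, hw, hww⟩ := Finset.mem_image.mp h
    rwa [← Option.some_injective _ hww]

lemma hdec {n : ℕ} {G : SimpleGraph (Fin n)} {f : Fin n → Option (Fin n)}
    (hf : f ∈ Fintype.piFinset (Ov G)) :
    ∀ u v, u < v → s(u, v) ∈ Phi f → f v = some u := by
  intro u v huv hmem
  obtain ⟨v0, u0, h1, heq⟩ := mem_Phi.mp hmem
  have hu0 : u0 < v0 := (mem_blw.mp (hOf hf v0 u0 h1)).1
  rcases Sym2.eq_iff.mp heq with ⟨ha, hb⟩ | ⟨ha, hb⟩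
  · rw [hb, ha]; exact h1
  · exact absurd (hb ▸ ha ▸ hu0) (not_lt.mpr (le_of_lt huv))

lemma Phi_isISF {n : ℕ} {G : SimpleGraph (Fin n)} {f : Fin n → Option (Fin n)}
    (hf : f ∈ Fintype.piFinset (Ov G)) : IsISF G (Phi f) := by
  rw [isISF_iff]
  constructor
  · intro e he
    obtain ⟨v, u, h1, heq⟩ := mem_Phi.mp (by exact_mod_cast he)
    have := (mem_blw.mp (hOf hf v u h1)).2
    rw [heq]
    exact (SimpleGraph.mem_edgeSet G).mpr this
  · intro u u' v huv hu'v h1 h2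
    have e1 := hdec hf u v huv h1
    have e2 := hdec hf u' v hu'v h2
    rw [e1] at e2
    exact Option.some_injective _ e2

lemma card_Phi {n : ℕ} {G : SimpleGraph (Fin n)} {f : Fin n → Option (Fin n)}
    (hf : f ∈ Fintype.piFinset (Ov G)) :
    (Phi f).card = (Finset.univ.filter (fun v => (f v).isSome)).card := by
  have hdisj : ∀ x ∈ (Finset.univ : Finset (Fin n)), ∀ y ∈ Finset.univ, x ≠ y →
      Disjoint ((f x).elim (∅ : Finset (Sym2 (Fin n))) (fun u => {s(u, x)}))
        ((f y).elim (∅ : Finset (Sym2 (Fin n))) (fun u => {s(u, y)})) := by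
    intro x _ y _ hxy
    cases hfx : f x with
    | none =>
      simp only [Option.elim_none]; exact Finset.disjoint_empty_left _
    | some ux =>
      cases hfy : f y with
      | none =>
        simp only [Option.elim_none]; exact Finset.disjoint_empty_right _
      | some uy =>
        have hux : ux < x := (mem_blw.mp (hOf hf x ux hfx)).1
        have huy : uy < y := (mem_blw.mp (hOf hf y uy hfy)).1
        simp only [Option.elim_some, Finset.disjoint_singleton]
        intro hcon
        rcases Sym2.eq_iff.mp hcon with ⟨ha, hb⟩ | ⟨ha, hb⟩
        · exact hxy hb
        · rw [← ha] at huy; rw [hb] at hux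
          exact absurd (hux.trans huy) (lt_irrefl _)
  rw [Phi, Finset.card_biUnion hdisj, Finset.card_filter]
  refine Finset.sum_congr rfl ?_
  intro v _
  cases hfv : f v <;> simp [hfv]

lemma weight_Phi {n : ℕ} {G : SimpleGraph (Fin n)} (t : ℤ) {f : Fin n → Option (Fin n)}
    (hf : f ∈ Fintype.piFinset (Ov G)) :
    ∏ v : Fin n, ((f v).elim t (fun _ => -1)) =
      (-1 : ℤ) ^ (Phi f).card * t ^ (n - (Phi f).card) := by
  rw [card_Phi hf]
  rw [← Finset.prod_filter_mul_prod_filter_not Finset.univ (fun v => (f v).isSome)]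
  have h1 : ∏ v ∈ Finset.univ.filter (fun v => (f v).isSome), ((f v).elim t (fun _ => -1))
      = (-1 : ℤ) ^ (Finset.univ.filter (fun v => (f v).isSome)).card := by
    rw [← Finset.prod_const]
    refine Finset.prod_congr rfl ?_
    intro v hv
    obtain ⟨u, hu⟩ := Option.isSome_iff_exists.mp (Finset.mem_filter.mp hv).2
    rw [hu]; rfl
  have h2 : ∏ v ∈ Finset.univ.filter (fun v => ¬ (f v).isSome), ((f v).elim t (fun _ => -1))
      = t ^ (n - (Finset.univ.filter (fun v => (f v).isSome)).card) := by
    have hcard : (Finset.univ.filter (fun v => ¬ (f v).isSome)).card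
        = n - (Finset.univ.filter (fun v => (f v).isSome)).card := by
      have := Finset.card_filter_add_card_filter_not
        (s := (Finset.univ : Finset (Fin n))) (fun v => (f v).isSome)
      simp only [Finset.card_univ, Fintype.card_fin] at this
      omega
    rw [← hcard, ← Finset.prod_const]
    refine Finset.prod_congr rfl ?_
    intro v hv
    have := (Finset.mem_filter.mp hv).2
    rw [Option.not_isSome_iff_eq_none] at this
    rw [this]; rfl
  rw [h1, h2]

lemma factor_eq {n : ℕ} (G : SimpleGraph (Fin n)) (t : ℤ) (v : Fin n) :
    ∑ o ∈ Ov G v, (o.elim t (fun _ => -1)) = t - ((blw G v).card : ℤ) := by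
  rw [Ov, Finset.sum_insert (by simp)]
  have : ∑ o ∈ (blw G v).image some, (o.elim t (fun _ => -1) : ℤ)
      = ∑ u ∈ blw G v, (-1 : ℤ) := by
    rw [Finset.sum_image (fun x _ y _ h => Option.some_injective _ h)]
    rfl
  rw [this, Finset.sum_const]
  simp only [Option.elim_none, nsmul_eq_mul, mul_neg, mul_one]
  ring

lemma exists_Phi_eq {n : ℕ} {G : SimpleGraph (Fin n)} {F : Finset (Sym2 (Fin n))}
    (hF : IsISF G F) : ∃ f ∈ Fintype.piFinset (Ov G), Phi f = F := by
  obtain ⟨hFE, LC⟩ := (isISF_iff G F).mp hF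
  refine ⟨fun v => if h : ∃ u, u < v ∧ s(u, v) ∈ F then some h.choose else none, ?_, ?_⟩
  · rw [Fintype.mem_piFinset]
    intro v
    by_cases h : ∃ u, u < v ∧ s(u, v) ∈ F
    · rw [dif_pos h, Ov, Finset.mem_insert]
      right
      refine Finset.mem_image.mpr ⟨h.choose, ?_, rfl⟩
      have hs := h.choose_spec
      exact mem_blw.mpr ⟨hs.1, (SimpleGraph.mem_edgeSet G).mp (hFE hs.2)⟩
    · rw [dif_neg h, Ov]; exact Finset.mem_insert_self _ _
  · ext e
    rw [mem_Phi]
    constructor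
    · rintro ⟨v, u, h1, h2⟩
      by_cases h : ∃ u, u < v ∧ s(u, v) ∈ F
      · rw [dif_pos h] at h1
        have hs := h.choose_spec
        have hu : h.choose = u := Option.some_injective _ h1
        rw [h2, ← hu]; exact hs.2
      · rw [dif_neg h] at h1; exact absurd h1 (by simp)
    · intro he
      have hne : ¬ e.IsDiag := G.not_isDiag_of_mem_edgeSet (hFE he)
      revert he hne
      refine e.ind ?_
      intro a b he hne
      rw [Sym2.mk_isDiag_iff] at hne
      rcases lt_or_gt_of_ne hne with hab | hab
      · have h : ∃ u, u < b ∧ s(u, b) ∈ F := ⟨a, hab, he⟩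
        refine ⟨b, h.choose, dif_pos h, ?_⟩
        have hs := h.choose_spec
        rw [LC hs.1 hab hs.2 he]
      · have he' : s(b, a) ∈ F := by rwa [Sym2.eq_swap] at he
        have h : ∃ u, u < a ∧ s(u, a) ∈ F := ⟨b, hab, he'⟩
        refine ⟨a, h.choose, dif_pos h, ?_⟩
        have hs := h.choose_spec
        rw [LC hs.1 hab hs.2 he', Sym2.eq_swap]

lemma isf_card_le {n : ℕ} {G : SimpleGraph (Fin n)} {F : Finset (Sym2 (Fin n))}
    (hF : IsISF G F) : F.card ≤ n := by
  obtain ⟨f, hf, hPhi⟩ := exists_Phi_eq hF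
  rw [← hPhi, card_Phi hf]
  calc (Finset.univ.filter (fun v => (f v).isSome)).card
      ≤ (Finset.univ : Finset (Fin n)).card := Finset.card_filter_le _ _
    _ = n := by simp

lemma sum_isf_eq_prod {n : ℕ} (G : SimpleGraph (Fin n)) (t : ℤ) :
    ∑ m ∈ Finset.range (n + 1), (-1 : ℤ) ^ m * (isf G m : ℤ) * t ^ (n - m)
      = ∏ v : Fin n, (t - ((blw G v).card : ℤ)) := by
  have step2 : ∏ v : Fin n, (t - ((blw G v).card : ℤ))
      = ∑ f ∈ Fintype.piFinset (Ov G), ∏ v : Fin n, ((f v).elim t (fun _ => -1)) := by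
    have h := Finset.prod_univ_sum (κ := fun _ : Fin n => Option (Fin n)) (Ov G)
      (fun _ o => (o.elim t (fun _ => -1) : ℤ))
    exact (Finset.prod_congr rfl (fun v _ => (factor_eq G t v).symm)).trans h
  have step3 : ∑ f ∈ Fintype.piFinset (Ov G), ∏ v : Fin n, ((f v).elim t (fun _ => -1))
      = ∑ F ∈ Finset.univ.filter (fun F => IsISF G F),
          (-1 : ℤ) ^ F.card * t ^ (n - F.card) := by
    refine Finset.sum_bij (fun f _ => Phi f) ?_ ?_ ?_ ?_
    · intro f hf
      exact Finset.mem_filter.mpr ⟨Finset.mem_univ _, Phi_isISF hf⟩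
    · intro f1 h1 f2 h2 heq0
      have heq : Phi f1 = Phi f2 := heq0
      funext v
      cases hf1 : f1 v with
      | some u =>
        have hu : u < v := (mem_blw.mp (hOf h1 v u hf1)).1
        have : s(u, v) ∈ Phi f1 := mem_Phi.mpr ⟨v, u, hf1, rfl⟩
        rw [heq] at this
        rw [hdec h2 u v hu this]
      | none =>
        cases hf2 : f2 v with
        | none => rfl
        | some u =>
          have hu : u < v := (mem_blw.mp (hOf h2 v u hf2)).1
          have : s(u, v) ∈ Phi f2 := mem_Phi.mpr ⟨v, u, hf2, rfl⟩
          rw [← heq] at this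
          rw [hdec h1 u v hu this] at hf1
          exact absurd hf1 (by simp)
    · intro F hF
      obtain ⟨f, hf, hPhi⟩ := exists_Phi_eq (Finset.mem_filter.mp hF).2
      exact ⟨f, hf, hPhi⟩
    · intro f hf
      exact weight_Phi t hf
  have step1 : ∑ m ∈ Finset.range (n + 1), (-1 : ℤ) ^ m * (isf G m : ℤ) * t ^ (n - m)
      = ∑ F ∈ Finset.univ.filter (fun F => IsISF G F),
          (-1 : ℤ) ^ F.card * t ^ (n - F.card) := by
    have hfib := Finset.sum_fiberwise_of_maps_to
      (s := Finset.univ.filter (fun F => IsISF G F))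
      (t := Finset.range (n + 1)) (g := fun F : Finset (Sym2 (Fin n)) => F.card)
      (fun F hF => Finset.mem_range.mpr
        (Nat.lt_succ_of_le (isf_card_le (Finset.mem_filter.mp hF).2)))
      (fun F : Finset (Sym2 (Fin n)) => (-1 : ℤ) ^ F.card * t ^ (n - F.card))
    rw [← hfib]
    refine Finset.sum_congr rfl ?_
    intro m _
    have hinner : ∑ F ∈ (Finset.univ.filter (fun F => IsISF G F)).filter
        (fun F => F.card = m), (-1 : ℤ) ^ F.card * t ^ (n - F.card)
        = ((Finset.univ.filter (fun F => IsISF G F)).filter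
            (fun F => F.card = m)).card • ((-1 : ℤ) ^ m * t ^ (n - m)) := by
      rw [← Finset.sum_const]
      refine Finset.sum_congr rfl ?_
      intro F hF
      rw [(Finset.mem_filter.mp hF).2]
    rw [hinner, Finset.filter_filter]
    have : isf G m = (Finset.univ.filter
        (fun F => IsISF G F ∧ F.card = m)).card := rfl
    rw [nsmul_eq_mul, ← this]
    ring
  rw [step1, ← step3, ← step2]
noncomputable def Ncol (n t : ℕ) (G : SimpleGraph (Fin n)) : ℕ :=
  Nat.card {c : Fin n → Fin t // ∀ u v, G.Adj u v → c u ≠ c v}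

section recursion

variable {n t : ℕ}

lemma lastCases_proper (G : SimpleGraph (Fin (n + 1))) (c' : Fin n → Fin t) (x : Fin t)
    (h1 : ∀ u v, G.Adj u.castSucc v.castSucc → c' u ≠ c' v)
    (h2 : ∀ u, G.Adj u.castSucc (Fin.last n) → x ≠ c' u) :
    ∀ u v, G.Adj u v → Fin.lastCases (motive := fun _ => Fin t) x c' u
      ≠ Fin.lastCases (motive := fun _ => Fin t) x c' v := by
  intro u v h
  rcases Fin.eq_castSucc_or_eq_last u with ⟨i, rfl⟩ | rfl <;>
    rcases Fin.eq_castSucc_or_eq_last v with ⟨j, rfl⟩ | rfl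
  · rw [Fin.lastCases_castSucc, Fin.lastCases_castSucc]
    exact h1 i j h
  · rw [Fin.lastCases_castSucc, Fin.lastCases_last]
    exact (h2 i h).symm
  · rw [Fin.lastCases_last, Fin.lastCases_castSucc]
    exact h2 j h.symm
  · exact absurd h (G.loopless.irrefl _)

def resProper (G : SimpleGraph (Fin (n + 1)))
    (c : {c : Fin (n + 1) → Fin t // ∀ u v, G.Adj u v → c u ≠ c v}) :
    {c' : Fin n → Fin t // ∀ u v, (G.comap Fin.castSucc).Adj u v → c' u ≠ c' v} :=
  ⟨fun v => c.1 v.castSucc, fun u v h => c.2 _ _ (SimpleGraph.comap_adj.mp h)⟩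

noncomputable def fiberEquiv (G : SimpleGraph (Fin (n + 1)))
    (c' : {c' : Fin n → Fin t // ∀ u v, (G.comap Fin.castSucc).Adj u v → c' u ≠ c' v}) :
    {c : {c : Fin (n + 1) → Fin t // ∀ u v, G.Adj u v → c u ≠ c v} // resProper G c = c'} ≃
      {x : Fin t // ∀ u : Fin n, G.Adj u.castSucc (Fin.last n) → x ≠ c'.1 u} where
  toFun c := ⟨c.1.1 (Fin.last n), by
    intro u hadj
    have hcomp : c.1.1 u.castSucc = c'.1 u := congrFun (congrArg Subtype.val c.2) u
    rw [← hcomp]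
    exact (c.1.2 _ _ hadj).symm⟩
  invFun x := ⟨⟨Fin.lastCases (motive := fun _ => Fin t) x.1 c'.1,
      lastCases_proper G c'.1 x.1
        (fun u v h => c'.2 u v (SimpleGraph.comap_adj.mpr h)) x.2⟩,
    by
      apply Subtype.ext
      funext v
      show Fin.lastCases (motive := fun _ => Fin t) x.1 c'.1 v.castSucc = c'.1 v
      exact Fin.lastCases_castSucc v⟩
  left_inv c := by
    apply Subtype.ext; apply Subtype.ext
    funext v
    induction v using Fin.lastCases with
    | last =>
      show Fin.lastCases (motive := fun _ => Fin t) (c.1.1 (Fin.last n)) c'.1 (Fin.last n)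
        = c.1.1 (Fin.last n)
      exact Fin.lastCases_last
    | cast i =>
      show Fin.lastCases _ _ i.castSucc = c.1.1 i.castSucc
      rw [Fin.lastCases_castSucc]
      exact (congrFun (congrArg Subtype.val c.2) i).symm
  right_inv x := by
    apply Subtype.ext
    show Fin.lastCases (motive := fun _ => Fin t) x.1 c'.1 (Fin.last n) = x.1
    exact Fin.lastCases_last

noncomputable instance (G : SimpleGraph (Fin n)) :
    Fintype {c : Fin n → Fin t // ∀ u v, G.Adj u v → c u ≠ c v} :=
  Fintype.ofFinite _

lemma Ncol_succ (G : SimpleGraph (Fin (n + 1))) :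
    Ncol (n + 1) t G =
      ∑ c' : {c' : Fin n → Fin t // ∀ u v, (G.comap Fin.castSucc).Adj u v → c' u ≠ c' v},
        (t - ((Finset.univ.filter
          (fun u : Fin n => G.Adj u.castSucc (Fin.last n))).image c'.1).card) := by
  rw [Ncol, Nat.card_eq_fintype_card,
    Fintype.card_congr (Equiv.sigmaFiberEquiv (resProper G)).symm, Fintype.card_sigma]
  refine Finset.sum_congr rfl ?_
  intro c' _
  rw [Fintype.card_congr (fiberEquiv G c')]
  have hset : Finset.univ.filter
      (fun x : Fin t => ∀ u : Fin n, G.Adj u.castSucc (Fin.last n) → x ≠ c'.1 u)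
      = ((Finset.univ.filter
          (fun u : Fin n => G.Adj u.castSucc (Fin.last n))).image c'.1)ᶜ := by
    ext x
    simp only [Finset.mem_filter, Finset.mem_univ, true_and, Finset.mem_compl,
      Finset.mem_image, not_exists, not_and]
    constructor
    · intro h u hadj heq
      exact h u hadj heq.symm
    · intro h u hadj heq
      exact h u hadj heq.symm
  rw [Fintype.card_subtype, hset, Finset.card_compl, Fintype.card_fin]

lemma img_card_le_t (c' : Fin n → Fin t) (s : Finset (Fin n)) :
    (s.image c').card ≤ t := by
  calc (s.image c').card ≤ (Finset.univ : Finset (Fin t)).card := Finset.card_le_univ _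
    _ = t := by simp

lemma Ncol_succ_int (G : SimpleGraph (Fin (n + 1))) :
    (Ncol (n + 1) t G : ℤ) =
      ∑ c' : {c' : Fin n → Fin t // ∀ u v, (G.comap Fin.castSucc).Adj u v → c' u ≠ c' v},
        ((t : ℤ) - ((Finset.univ.filter
          (fun u : Fin n => G.Adj u.castSucc (Fin.last n))).image c'.1).card) := by
  rw [Ncol_succ, Nat.cast_sum]
  refine Finset.sum_congr rfl (fun c' _ => ?_)
  rw [Nat.cast_sub (img_card_le_t _ _)]

lemma blw_last_card (G : SimpleGraph (Fin (n + 1))) :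
    (Finset.univ.filter (fun u : Fin n => G.Adj u.castSucc (Fin.last n))).card
      = (blw G (Fin.last n)).card := by
  rw [← Finset.card_image_of_injective
    (Finset.univ.filter (fun u : Fin n => G.Adj u.castSucc (Fin.last n)))
    (Fin.castSucc_injective n)]
  congr 1
  ext u
  simp only [Finset.mem_image, Finset.mem_filter, Finset.mem_univ, true_and, mem_blw]
  constructor
  · rintro ⟨u', hadj, rfl⟩; exact ⟨Fin.castSucc_lt_last u', hadj⟩
  · rintro ⟨hlt, hadj⟩
    obtain ⟨u', rfl⟩ := Fin.exists_castSucc_eq.mpr (ne_of_lt hlt)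
    exact ⟨u', hadj, rfl⟩

lemma blw_castSucc_card (G : SimpleGraph (Fin (n + 1))) (v : Fin n) :
    (blw (G.comap Fin.castSucc) v).card = (blw G v.castSucc).card := by
  rw [← Finset.card_image_of_injective (blw (G.comap Fin.castSucc) v)
    (Fin.castSucc_injective n)]
  congr 1
  ext u
  simp only [Finset.mem_image, mem_blw, SimpleGraph.comap_adj]
  constructor
  · rintro ⟨u', ⟨hlt, hadj⟩, rfl⟩
    exact ⟨Fin.castSucc_lt_castSucc_iff.mpr hlt, hadj⟩
  · rintro ⟨hlt, hadj⟩
    have hne : u ≠ Fin.last n := ne_of_lt (lt_trans hlt (Fin.castSucc_lt_last v))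
    obtain ⟨u', rfl⟩ := Fin.exists_castSucc_eq.mpr hne
    exact ⟨u', ⟨Fin.castSucc_lt_castSucc_iff.mp hlt, hadj⟩, rfl⟩

lemma blw_card_lt {m : ℕ} (G : SimpleGraph (Fin m)) (v : Fin m) : (blw G v).card < m := by
  have hsub : blw G v ⊆ Finset.univ.erase v := by
    intro u hu
    exact Finset.mem_erase.mpr ⟨ne_of_lt (mem_blw.mp hu).1, Finset.mem_univ u⟩
  have hm : 0 < m := v.pos
  calc (blw G v).card ≤ (Finset.univ.erase v).card := Finset.card_le_card hsub
    _ = m - 1 := by rw [Finset.card_erase_of_mem (Finset.mem_univ v)]; simp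
    _ < m := by omega

end recursion
lemma Ncol_zero (G : SimpleGraph (Fin 0)) (t : ℕ) : Ncol 0 t G = 1 := by
  rw [Ncol]
  have h1 : Nonempty {c : Fin 0 → Fin t // ∀ u v, G.Adj u v → c u ≠ c v} :=
    ⟨⟨fun v => v.elim0, fun u => u.elim0⟩⟩
  have h2 : Subsingleton {c : Fin 0 → Fin t // ∀ u v, G.Adj u v → c u ≠ c v} :=
    ⟨fun a b => Subtype.ext (funext fun v => v.elim0)⟩
  exact Nat.card_unique

/-- The natural ordering `1, 2, …, n` is a perfect elimination ordering of `G`. -/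
def IsPEO {n : ℕ} (G : SimpleGraph (Fin n)) : Prop :=
  ∀ i j k : Fin n, i < j → j < k → G.Adj i k → G.Adj j k → G.Adj i j

lemma peo_count : ∀ (n : ℕ) (G : SimpleGraph (Fin n)), IsPEO G → ∀ t : ℕ,
    (Ncol n t G : ℤ) = ∏ v : Fin n, ((t : ℤ) - ((blw G v).card : ℤ)) := by
  intro n
  induction n with
  | zero => intro G _ t; rw [Ncol_zero]; simp
  | succ n ih =>
    intro G hPEO t
    have hPEO' : IsPEO (G.comap (Fin.castSucc : Fin n → Fin (n + 1))) := by
      intro i j k hij hjk h1 h2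
      exact SimpleGraph.comap_adj.mpr (hPEO _ _ _ (Fin.castSucc_lt_castSucc_iff.mpr hij)
        (Fin.castSucc_lt_castSucc_iff.mpr hjk) (SimpleGraph.comap_adj.mp h1)
        (SimpleGraph.comap_adj.mp h2))
    rw [Ncol_succ_int]
    have himg : ∀ c' : {c' : Fin n → Fin t // ∀ u v,
        (G.comap (Fin.castSucc : Fin n → Fin (n + 1))).Adj u v → c' u ≠ c' v},
        ((Finset.univ.filter
          (fun u : Fin n => G.Adj u.castSucc (Fin.last n))).image c'.1).card
          = (blw G (Fin.last n)).card := by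
      intro c'
      rw [← blw_last_card]
      apply Finset.card_image_of_injOn
      intro u hu w hw heq
      by_contra hne
      have hu' : G.Adj u.castSucc (Fin.last n) := (Finset.mem_filter.mp hu).2
      have hw' : G.Adj w.castSucc (Fin.last n) := (Finset.mem_filter.mp hw).2
      have hadj : G.Adj u.castSucc w.castSucc := by
        rcases lt_or_gt_of_ne hne with h | h
        · exact hPEO _ _ _ (Fin.castSucc_lt_castSucc_iff.mpr h)
            (Fin.castSucc_lt_last w) hu' hw'
        · exact (hPEO _ _ _ (Fin.castSucc_lt_castSucc_iff.mpr h)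
            (Fin.castSucc_lt_last u) hw' hu').symm
      exact c'.2 u w (SimpleGraph.comap_adj.mpr hadj) heq
    calc ∑ c' : {c' : Fin n → Fin t // ∀ u v,
          (G.comap (Fin.castSucc : Fin n → Fin (n + 1))).Adj u v → c' u ≠ c' v},
          ((t : ℤ) - ((Finset.univ.filter
            (fun u : Fin n => G.Adj u.castSucc (Fin.last n))).image c'.1).card)
        = ∑ _c' : {c' : Fin n → Fin t // ∀ u v,
            (G.comap (Fin.castSucc : Fin n → Fin (n + 1))).Adj u v → c' u ≠ c' v},
            ((t : ℤ) - ((blw G (Fin.last n)).card : ℤ)) :=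
          Finset.sum_congr rfl (fun c' _ => by rw [himg c'])
      _ = (Ncol n t (G.comap (Fin.castSucc : Fin n → Fin (n + 1))) : ℤ) *
            ((t : ℤ) - ((blw G (Fin.last n)).card : ℤ)) := by
          rw [Finset.sum_const, Finset.card_univ, nsmul_eq_mul, Ncol,
            Nat.card_eq_fintype_card]
      _ = (∏ v : Fin n, ((t : ℤ) -
            ((blw (G.comap (Fin.castSucc : Fin n → Fin (n + 1))) v).card : ℤ))) *
            ((t : ℤ) - ((blw G (Fin.last n)).card : ℤ)) := by
          rw [ih _ hPEO' t]
      _ = ∏ v : Fin (n + 1), ((t : ℤ) - ((blw G v).card : ℤ)) := by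
          rw [Fin.prod_univ_castSucc]
          congr 1
          exact Finset.prod_congr rfl (fun v _ => by rw [blw_castSucc_card])

lemma count_ge : ∀ (n : ℕ) (G : SimpleGraph (Fin n)) (t : ℕ), n ≤ t →
    (∏ v : Fin n, ((t : ℤ) - ((blw G v).card : ℤ))) ≤ (Ncol n t G : ℤ) := by
  intro n
  induction n with
  | zero => intro G t _; rw [Ncol_zero]; simp
  | succ n ih =>
    intro G t ht
    have hlast0 : (0 : ℤ) ≤ (t : ℤ) - ((blw G (Fin.last n)).card : ℤ) := by
      have h1 := blw_card_lt G (Fin.last n)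
      have h2 : (blw G (Fin.last n)).card ≤ t := by omega
      omega
    rw [Ncol_succ_int, Fin.prod_univ_castSucc]
    calc (∏ v : Fin n, ((t : ℤ) - ((blw G v.castSucc).card : ℤ))) *
          ((t : ℤ) - ((blw G (Fin.last n)).card : ℤ))
        = (∏ v : Fin n, ((t : ℤ) -
            ((blw (G.comap (Fin.castSucc : Fin n → Fin (n + 1))) v).card : ℤ))) *
            ((t : ℤ) - ((blw G (Fin.last n)).card : ℤ)) := by
          congr 1
          exact Finset.prod_congr rfl (fun v _ => by rw [blw_castSucc_card])
      _ ≤ (Ncol n t (G.comap (Fin.castSucc : Fin n → Fin (n + 1))) : ℤ) *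
            ((t : ℤ) - ((blw G (Fin.last n)).card : ℤ)) :=
          mul_le_mul_of_nonneg_right (ih _ t (by omega)) hlast0
      _ = ∑ _c' : {c' : Fin n → Fin t // ∀ u v,
            (G.comap (Fin.castSucc : Fin n → Fin (n + 1))).Adj u v → c' u ≠ c' v},
            ((t : ℤ) - ((blw G (Fin.last n)).card : ℤ)) := by
          rw [Finset.sum_const, Finset.card_univ, nsmul_eq_mul, Ncol,
            Nat.card_eq_fintype_card]
      _ ≤ ∑ c' : {c' : Fin n → Fin t // ∀ u v,
            (G.comap (Fin.castSucc : Fin n → Fin (n + 1))).Adj u v → c' u ≠ c' v},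
            ((t : ℤ) - ((Finset.univ.filter
              (fun u : Fin n => G.Adj u.castSucc (Fin.last n))).image c'.1).card) := by
          refine Finset.sum_le_sum (fun c' _ => ?_)
          have h1 : ((Finset.univ.filter
              (fun u : Fin n => G.Adj u.castSucc (Fin.last n))).image c'.1).card
              ≤ (blw G (Fin.last n)).card := by
            rw [← blw_last_card]
            exact Finset.card_image_le
          omega

def swapFun {n t : ℕ} (hnt : n ≤ t) (i' j' : Fin n) (v : Fin n) : Fin t :=
  Fin.castLE hnt (if v = j' then i' else v)

lemma swapFun_apply {n t : ℕ} (hnt : n ≤ t) (i' j' v : Fin n) :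
    swapFun hnt i' j' v = Fin.castLE hnt (if v = j' then i' else v) := rfl

lemma count_gt : ∀ (n : ℕ) (G : SimpleGraph (Fin n)) (t : ℕ), n < t → ¬ IsPEO G →
    (∏ v : Fin n, ((t : ℤ) - ((blw G v).card : ℤ))) < (Ncol n t G : ℤ) := by
  intro n
  induction n with
  | zero => intro G t _ hn; exact absurd (fun i _ _ _ _ _ _ => i.elim0) hn
  | succ n ih =>
    intro G t ht hnPEO
    obtain ⟨i, j, k, hij, hjk, hik, hjkadj, hnadj⟩ :
        ∃ i j k : Fin (n + 1), i < j ∧ j < k ∧ G.Adj i k ∧ G.Adj j k ∧ ¬ G.Adj i j := by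
      unfold IsPEO at hnPEO
      push_neg at hnPEO
      obtain ⟨i, j, k, h1, h2, h3, h4, h5⟩ := hnPEO
      exact ⟨i, j, k, h1, h2, h3, h4, h5⟩
    have hnbrscard : (Finset.univ.filter
        (fun u : Fin n => G.Adj u.castSucc (Fin.last n))).card
        = (blw G (Fin.last n)).card := blw_last_card G
    have hlastpos : (0 : ℤ) < (t : ℤ) - ((blw G (Fin.last n)).card : ℤ) :=
      sub_pos.mpr (by exact_mod_cast lt_trans (blw_card_lt G (Fin.last n)) ht)
    have hprodcast : (∏ v : Fin n, ((t : ℤ) - ((blw G v.castSucc).card : ℤ)))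
        = ∏ v : Fin n, ((t : ℤ) -
            ((blw (G.comap (Fin.castSucc : Fin n → Fin (n + 1))) v).card : ℤ)) :=
      Finset.prod_congr rfl (fun v _ => by rw [blw_castSucc_card])
    have hconst : ∑ _c' : {c' : Fin n → Fin t // ∀ u v,
          (G.comap (Fin.castSucc : Fin n → Fin (n + 1))).Adj u v → c' u ≠ c' v},
          ((t : ℤ) - ((blw G (Fin.last n)).card : ℤ))
        = (Ncol n t (G.comap (Fin.castSucc : Fin n → Fin (n + 1))) : ℤ) *
            ((t : ℤ) - ((blw G (Fin.last n)).card : ℤ)) := by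
      rw [Finset.sum_const, Finset.card_univ, nsmul_eq_mul, Ncol,
        Nat.card_eq_fintype_card]
    rw [Ncol_succ_int, Fin.prod_univ_castSucc, hprodcast]
    by_cases hk : k = Fin.last n
    · subst hk
      obtain ⟨i', rfl⟩ := Fin.exists_castSucc_eq.mpr (ne_of_lt (lt_trans hij hjk))
      obtain ⟨j', rfl⟩ := Fin.exists_castSucc_eq.mpr (ne_of_lt hjk)
      have hij' : i' ≠ j' := fun h => (ne_of_lt hij) (congrArg Fin.castSucc h)
      have hnt : n ≤ t := le_of_lt (Nat.lt_of_succ_lt ht)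
      have hc0 : ∀ u v, (G.comap (Fin.castSucc : Fin n → Fin (n + 1))).Adj u v →
          swapFun hnt i' j' u ≠ swapFun hnt i' j' v := by
        intro u v hadj heq
        have huv : u ≠ v := hadj.ne
        rw [swapFun_apply, swapFun_apply] at heq
        have heq' : (if u = j' then i' else u) = (if v = j' then i' else v) :=
          Fin.castLE_injective hnt heq
        by_cases hu : u = j'
        · by_cases hv : v = j'
          · exact huv (hu.trans hv.symm)
          · rw [if_pos hu, if_neg hv] at heq'
            rw [hu, ← heq'] at hadj
            exact hnadj (SimpleGraph.comap_adj.mp hadj).symm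
        · by_cases hv : v = j'
          · rw [if_neg hu, if_pos hv] at heq'
            rw [hv, heq'] at hadj
            exact hnadj (SimpleGraph.comap_adj.mp hadj)
          · rw [if_neg hu, if_neg hv] at heq'
            exact huv heq'
      have hc0j : swapFun hnt i' j' j' = swapFun hnt i' j' i' := by
        rw [swapFun_apply, swapFun_apply, if_pos rfl, if_neg hij']
      have hi'mem : i' ∈ Finset.univ.filter
          (fun u : Fin n => G.Adj u.castSucc (Fin.last n)) :=
        Finset.mem_filter.mpr ⟨Finset.mem_univ _, hik⟩
      have hj'mem : j' ∈ Finset.univ.filter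
          (fun u : Fin n => G.Adj u.castSucc (Fin.last n)) :=
        Finset.mem_filter.mpr ⟨Finset.mem_univ _, hjkadj⟩
      have himg : ((Finset.univ.filter
          (fun u : Fin n => G.Adj u.castSucc (Fin.last n))).image (swapFun hnt i' j')).card
          ≤ (Finset.univ.filter
            (fun u : Fin n => G.Adj u.castSucc (Fin.last n))).card - 1 := by
        have hsub : (Finset.univ.filter
            (fun u : Fin n => G.Adj u.castSucc (Fin.last n))).image (swapFun hnt i' j') ⊆
            ((Finset.univ.filter
              (fun u : Fin n => G.Adj u.castSucc (Fin.last n))).erase j').image (swapFun hnt i' j') := by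
          intro x hx
          obtain ⟨u, hu, rfl⟩ := Finset.mem_image.mp hx
          by_cases hne : u = j'
          · refine Finset.mem_image.mpr ⟨i', Finset.mem_erase.mpr ⟨hij', hi'mem⟩, ?_⟩
            rw [hne]
            exact hc0j.symm
          · exact Finset.mem_image.mpr ⟨u, Finset.mem_erase.mpr ⟨hne, hu⟩, rfl⟩
        calc ((Finset.univ.filter
            (fun u : Fin n => G.Adj u.castSucc (Fin.last n))).image (swapFun hnt i' j')).card
            ≤ (((Finset.univ.filter
              (fun u : Fin n => G.Adj u.castSucc (Fin.last n))).erase j').image (swapFun hnt i' j')).card :=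
            Finset.card_le_card hsub
          _ ≤ ((Finset.univ.filter
              (fun u : Fin n => G.Adj u.castSucc (Fin.last n))).erase j').card :=
            Finset.card_image_le
          _ = _ := Finset.card_erase_of_mem hj'mem
      have hnbrs1 : 1 ≤ (Finset.univ.filter
          (fun u : Fin n => G.Adj u.castSucc (Fin.last n))).card :=
        Finset.card_pos.mpr ⟨i', hi'mem⟩
      have hsum : ∑ _c' : {c' : Fin n → Fin t // ∀ u v,
            (G.comap (Fin.castSucc : Fin n → Fin (n + 1))).Adj u v → c' u ≠ c' v},
            ((t : ℤ) - ((blw G (Fin.last n)).card : ℤ))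
          < ∑ c' : {c' : Fin n → Fin t // ∀ u v,
            (G.comap (Fin.castSucc : Fin n → Fin (n + 1))).Adj u v → c' u ≠ c' v},
            ((t : ℤ) - ((Finset.univ.filter
              (fun u : Fin n => G.Adj u.castSucc (Fin.last n))).image c'.1).card) := by
        refine Finset.sum_lt_sum (fun c' _ => ?_) ⟨⟨swapFun hnt i' j', hc0⟩, Finset.mem_univ _, ?_⟩
        · have h1 : ((Finset.univ.filter
              (fun u : Fin n => G.Adj u.castSucc (Fin.last n))).image c'.1).card
              ≤ (blw G (Fin.last n)).card := by
            rw [← hnbrscard]; exact Finset.card_image_le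
          exact sub_le_sub_left (by exact_mod_cast h1) (t : ℤ)
        · show (t : ℤ) - ((blw G (Fin.last n)).card : ℤ) < _
          have h2 : ((Finset.univ.filter
              (fun u : Fin n => G.Adj u.castSucc (Fin.last n))).image
                (swapFun hnt i' j')).card < (blw G (Fin.last n)).card := by
            rw [← hnbrscard]
            exact Nat.lt_of_le_of_lt himg
              (Nat.sub_lt (lt_of_lt_of_le zero_lt_one hnbrs1) zero_lt_one)
          exact sub_lt_sub_left (by exact_mod_cast h2) (t : ℤ)
      calc (∏ v : Fin n, ((t : ℤ) -
            ((blw (G.comap (Fin.castSucc : Fin n → Fin (n + 1))) v).card : ℤ))) *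
            ((t : ℤ) - ((blw G (Fin.last n)).card : ℤ))
          ≤ (Ncol n t (G.comap (Fin.castSucc : Fin n → Fin (n + 1))) : ℤ) *
              ((t : ℤ) - ((blw G (Fin.last n)).card : ℤ)) :=
            mul_le_mul_of_nonneg_right (count_ge n _ t hnt) (le_of_lt hlastpos)
        _ = _ := hconst.symm
        _ < _ := hsum
    · have hklt : k < Fin.last n := lt_of_le_of_ne (Fin.le_last k) hk
      obtain ⟨k', rfl⟩ := Fin.exists_castSucc_eq.mpr hk
      obtain ⟨j', rfl⟩ := Fin.exists_castSucc_eq.mpr (ne_of_lt (lt_trans hjk hklt))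
      obtain ⟨i', rfl⟩ := Fin.exists_castSucc_eq.mpr
        (ne_of_lt (lt_trans (lt_trans hij hjk) hklt))
      have hnPEO' : ¬ IsPEO (G.comap (Fin.castSucc : Fin n → Fin (n + 1))) := by
        intro hP
        exact hnadj (SimpleGraph.comap_adj.mp
          (hP i' j' k' (Fin.castSucc_lt_castSucc_iff.mp hij)
            (Fin.castSucc_lt_castSucc_iff.mp hjk)
            (SimpleGraph.comap_adj.mpr hik) (SimpleGraph.comap_adj.mpr hjkadj)))
      have hih := ih (G.comap (Fin.castSucc : Fin n → Fin (n + 1))) t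
        (Nat.lt_of_succ_lt ht) hnPEO'
      calc (∏ v : Fin n, ((t : ℤ) -
            ((blw (G.comap (Fin.castSucc : Fin n → Fin (n + 1))) v).card : ℤ))) *
            ((t : ℤ) - ((blw G (Fin.last n)).card : ℤ))
          < (Ncol n t (G.comap (Fin.castSucc : Fin n → Fin (n + 1))) : ℤ) *
              ((t : ℤ) - ((blw G (Fin.last n)).card : ℤ)) :=
            mul_lt_mul_of_pos_right hih hlastpos
        _ = _ := hconst.symm
        _ ≤ ∑ c' : {c' : Fin n → Fin t // ∀ u v,
            (G.comap (Fin.castSucc : Fin n → Fin (n + 1))).Adj u v → c' u ≠ c' v},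
            ((t : ℤ) - ((Finset.univ.filter
              (fun u : Fin n => G.Adj u.castSucc (Fin.last n))).image c'.1).card) := by
          refine Finset.sum_le_sum (fun c' _ => ?_)
          have h1 : ((Finset.univ.filter
              (fun u : Fin n => G.Adj u.castSucc (Fin.last n))).image c'.1).card
              ≤ (blw G (Fin.last n)).card := by
            rw [← hnbrscard]; exact Finset.card_image_le
          exact sub_le_sub_left (by exact_mod_cast h1) (t : ℤ)

theorem stmt_5 {n : ℕ} (G : SimpleGraph (Fin n)) :
    IsPEO G ↔
      ∀ t : ℕ, 0 < t →
        (Nat.card {c : Fin n → Fin t // ∀ u v, G.Adj u v → c u ≠ c v} : ℤ)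
          = ∑ m ∈ Finset.range (n + 1), (-1) ^ m * (isf G m : ℤ) * (t : ℤ) ^ (n - m) := by
  constructor
  · intro h t _
    have h1 := peo_count n G h t
    have h2 := sum_isf_eq_prod G (t : ℤ)
    rw [h2]
    exact h1
  · intro h
    by_contra hn
    have h1 := h (n + 1) (Nat.succ_pos n)
    rw [sum_isf_eq_prod G ((n + 1 : ℕ) : ℤ)] at h1
    have h2 := count_gt n G (n + 1) (Nat.lt_succ_self n) hn
    unfold Ncol at h2
    rw [h1] at h2
    exact lt_irrefl _ h2
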